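/- Let P be a Set-based tripos with generic predicate tr_Σ ∈ P Σ, with codes →̇ ∈ Σ^(Σ×Σ) and ⋀̇ ∈ Σ^{𝒫(Σ)} satisfying ⟦→̇⟧_{Σ×Σ} = ⟦π⟧_{Σ×Σ} ⇨ ⟦π'⟧_{Σ×Σ} and ⟦⋀̇⟧_{𝒫(Σ)} = ∀e₂(⟦e₁⟧_E). Let A be the set of upward-closed subsets of A₀ (inductively generated by ξ̇ for ξ ∈ Σ and s ↦ α for s ∈ 𝒫(Σ), α ∈ A₀, with preorder generated by ξ̇ ≤ ξ̇ and (s ↦ α) ≤ (s' ↦ α') when s ⊆ s' and α ≤ α'), ordered by a ≼ b iff a ⊇ b; define φ₀ : A₀ → Σ by φ₀(ξ̇) := ξ, φ₀(s ↦ α) := (⋀̇ s) →̇ φ₀(α), φ̃₀(a) := {φ₀(α) : α ∈ a}, s^⊆ := {s' : s ⊆ s'}, the implication a → b := {s ↦ β : s ∈ φ̃₀(a)^⊆, β ∈ b} on A, φ(a) := ⋀̇ φ̃₀(a), tr_A := P φ(tr_Σ), and ⟪a⟫_X := P a(tr_A) for a ∈ A^X. Then for every set X and all families a, b ∈ A^X: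 ⟪x ↦ (a_x → b_x)⟫_X = ⟪a⟫_X ⇨ ⟪b⟫_X in the Heyting algebra P X. -/

import Mathlib

universe u v

/-- The inductively generated set of atoms `A₀`: a finite list of subsets of `σ`
terminated by an element of `σ`. -/
inductive A0 (σ : Type u) : Type u where
  | base : σ → A0 σ
  | arrow : Set σ → A0 σ → A0 σ

/-- The preorder on atoms, inductively generated by the two rules. -/
inductive A0.Le {σ : Type u} : A0 σ → A0 σ → Prop where
  | base (ξ : σ) : A0.Le (.base ξ) (.base ξ)
  | arrow {s s' : Set σ} {α α' : A0 σ} :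
      s ⊆ s' → A0.Le α α' → A0.Le (.arrow s α) (.arrow s' α')

/-- A subset of `A0 σ` is upward closed w.r.t. the preorder `A0.Le`. -/
def UpClosed {σ : Type u} (a : Set (A0 σ)) : Prop :=
  ∀ α β, α ∈ a → A0.Le α β → β ∈ a

/-- The carrier `A` of the implicative structure: upward-closed subsets of `A0 σ`. -/
def Aof (σ : Type u) : Type u := {a : Set (A0 σ) // UpClosed a}

/-- The conversion function `φ₀ : A₀ → Σ`. -/
def phi0 {σ : Type u} (dInf : Set σ → σ) (dImp : σ × σ → σ) : A0 σ → σ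
  | .base ξ => ξ
  | .arrow s α => dImp (dInf s, phi0 dInf dImp α)

/-- The conversion function `φ : A → Σ`, `φ(a) := ⋀̇ {φ₀(α) : α ∈ a}`. -/
def phiA {σ : Type u} (dInf : Set σ → σ) (dImp : σ × σ → σ) (a : Aof σ) : σ :=
  dInf (phi0 dInf dImp '' a.1)

/-- The implication of the implicative structure `A = Aof σ`:
`a → b := { s ↦ β : φ̃₀(a) ⊆ s, β ∈ b }`. -/
def Aimp {σ : Type u} (dInf : Set σ → σ) (dImp : σ × σ → σ)
    (a b : Aof σ) : Aof σ :=
  ⟨{γ | ∃ (s : Set σ) (β : A0 σ),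
      γ = A0.arrow s β ∧ phi0 dInf dImp '' a.1 ⊆ s ∧ β ∈ b.1}, by
    rintro γ γ' ⟨s, β, rfl, hs, hβ⟩ hle
    cases hle with
    | arrow hss hββ => exact ⟨_, _, rfl, hs.trans hss, b.2 _ _ hβ hββ⟩⟩

/-- Pullback of the membership relation along a family of sets `S : Y → Set Sig`. -/
def PBs {Y Sig : Type u} (S : Y → Set Sig) : Type u :=
  {w : Y × {z : Sig × Set Sig // z.1 ∈ z.2} // S w.1 = w.2.1.2}

theorem imp_via_Aimp
    (P : Type u → Type v) [∀ X, HeytingAlgebra (P X)]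
    (map : ∀ {X Y : Type u}, (X → Y) → P Y → P X)
    (map_id : ∀ (X : Type u), map (id : X → X) = id)
    (map_comp : ∀ {X Y Z : Type u} (f : X → Y) (g : Y → Z), map (g ∘ f) = map f ∘ map g)
    (map_inf : ∀ {X Y : Type u} (f : X → Y) (p q : P Y), map f (p ⊓ q) = map f p ⊓ map f q)
    (map_sup : ∀ {X Y : Type u} (f : X → Y) (p q : P Y), map f (p ⊔ q) = map f p ⊔ map f q)
    (map_himp : ∀ {X Y : Type u} (f : X → Y) (p q : P Y), map f (p ⇨ q) = map f p ⇨ map f q)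
    (map_top : ∀ {X Y : Type u} (f : X → Y), map f (⊤ : P Y) = ⊤)
    (map_bot : ∀ {X Y : Type u} (f : X → Y), map f (⊥ : P Y) = ⊥)
    (fE fA : ∀ {X Y : Type u}, (X → Y) → P X → P Y)
    (fE_mono : ∀ {X Y : Type u} (f : X → Y), Monotone (fE f))
    (fA_mono : ∀ {X Y : Type u} (f : X → Y), Monotone (fA f))
    (adjE : ∀ {X Y : Type u} (f : X → Y) (p : P X) (q : P Y), fE f p ≤ q ↔ p ≤ map f q)
    (adjA : ∀ {X Y : Type u} (f : X → Y) (p : P X) (q : P Y), q ≤ fA f p ↔ map f q ≤ p)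
    (BC : ∀ {X X₁ X₂ Y : Type u} (f₁ : X → X₁) (f₂ : X → X₂) (g₁ : X₁ → Y) (g₂ : X₂ → Y),
      g₁ ∘ f₁ = g₂ ∘ f₂ →
      (∀ (x₁ : X₁) (x₂ : X₂), g₁ x₁ = g₂ x₂ → ∃! x : X, f₁ x = x₁ ∧ f₂ x = x₂) →
      fE f₁ ∘ map f₂ = map g₁ ∘ fE g₂ ∧ fA f₁ ∘ map f₂ = map g₁ ∘ fA g₂)
    (Sig : Type u) (tr : P Sig)
    (htr : ∀ X : Type u, Function.Surjective (fun σ : X → Sig => map σ tr))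
    (dImp : Sig × Sig → Sig)
    (hdImp : map dImp tr
      = map (Prod.fst : Sig × Sig → Sig) tr ⇨ map (Prod.snd : Sig × Sig → Sig) tr)
    (dInf : Set Sig → Sig)
    (hdInf : map dInf tr = fA (fun z : {z : Sig × Set Sig // z.1 ∈ z.2} => z.1.2)
      (map (fun z : {z : Sig × Set Sig // z.1 ∈ z.2} => z.1.1) tr))
    (X : Type u) (a b : X → Aof Sig) :
    map (fun x => Aimp dInf dImp (a x) (b x)) (map (phiA dInf dImp) tr)
      = map a (map (phiA dInf dImp) tr) ⇨ map b (map (phiA dInf dImp) tr) := by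
  classical
  -- monotonicity of `map f`
  have map_mono : ∀ {Y Z : Type u} (f : Y → Z), Monotone (map f) := by
    intro Y Z f u v huv
    have h : u ⊓ v = u := inf_eq_left.mpr huv
    calc map f u = map f (u ⊓ v) := by rw [h]
      _ = map f u ⊓ map f v := map_inf f u v
      _ ≤ map f v := inf_le_right
  -- pointwise naturality
  have mapc : ∀ {Xa Ya Za : Type u} (f : Xa → Ya) (g : Ya → Za) (r : P Za),
      map f (map g r) = map (g ∘ f) r := by
    intro _ _ _ f g r; rw [map_comp]; rfl
  -- coded implication decodes to Heyting implication
  have himp_code : ∀ {Y : Type u} (f g : Y → Sig),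
      map (fun y => dImp (f y, g y)) tr = map f tr ⇨ map g tr := by
    intro Y f g
    have h1 : (fun y => dImp (f y, g y)) = dImp ∘ (fun y => (f y, g y)) := rfl
    rw [h1, ← mapc, hdImp, map_himp, mapc, mapc]
    rfl
  -- the membership of the second component
  have memq : ∀ {Y : Type u} (S : Y → Set Sig) (w : PBs S), w.1.2.1.1 ∈ S w.1.1 := by
    intro Y S w; rw [w.2]; exact w.1.2.2
  -- characterization of coded infima via Beck–Chevalley
  have infChar : ∀ {Y : Type u} (S : Y → Set Sig),
      map (fun y => dInf (S y)) tr
        = fA (fun w : PBs S => w.1.1) (map (fun w : PBs S => w.1.2.1.1) tr) := by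
    intro Y S
    have comm : S ∘ (fun w : PBs S => w.1.1)
        = (fun z : {z : Sig × Set Sig // z.1 ∈ z.2} => z.1.2)
            ∘ (fun w : PBs S => w.1.2) := by
      funext w; exact w.2
    have uniq : ∀ (y : Y) (z : {z : Sig × Set Sig // z.1 ∈ z.2}),
        S y = z.1.2 → ∃! w : PBs S, w.1.1 = y ∧ w.1.2 = z := by
      intro y z h
      refine ⟨⟨(y, z), h⟩, ⟨rfl, rfl⟩, ?_⟩
      rintro ⟨⟨y', z'⟩, h'⟩ ⟨h1, h2⟩
      cases h1; cases h2; rfl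
    have hBC := (BC (fun w : PBs S => w.1.1) (fun w : PBs S => w.1.2) S
      (fun z : {z : Sig × Set Sig // z.1 ∈ z.2} => z.1.2) comm uniq).2
    calc map (fun y => dInf (S y)) tr = map S (map dInf tr) := by rw [mapc]; rfl
      _ = map S (fA (fun z : {z : Sig × Set Sig // z.1 ∈ z.2} => z.1.2)
            (map (fun z : {z : Sig × Set Sig // z.1 ∈ z.2} => z.1.1) tr)) := by rw [hdInf]
      _ = fA (fun w : PBs S => w.1.1) (map (fun w : PBs S => w.1.2)
            (map (fun z : {z : Sig × Set Sig // z.1 ∈ z.2} => z.1.1) tr)) :=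
          (congrFun hBC _).symm
      _ = _ := by rw [mapc]; rfl
  -- "introduction rule" for coded infima
  have leInf : ∀ {Y : Type u} (S : Y → Set Sig) (r : P Y),
      map (fun w : PBs S => w.1.1) r ≤ map (fun w : PBs S => w.1.2.1.1) tr →
      r ≤ map (fun y => dInf (S y)) tr := by
    intro Y S r h; rw [infChar]; exact (adjA _ _ _).mpr h
  -- "elimination rule": the infimum is below any member code
  have infLe : ∀ {Y : Type u} (S : Y → Set Sig) (σ : Y → Sig), (∀ y, σ y ∈ S y) →
      map (fun y => dInf (S y)) tr ≤ map σ tr := by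
    intro Y S σ hσ
    have counit : map (fun w : PBs S => w.1.1)
        (map (fun y => dInf (S y)) tr) ≤ map (fun w : PBs S => w.1.2.1.1) tr := by
      rw [infChar]; exact (adjA _ _ _).mp le_rfl
    have h2 := map_mono (fun y : Y => (⟨(y, ⟨(σ y, S y), hσ y⟩), rfl⟩ : PBs S)) counit
    simp only [mapc] at h2
    have e1 := mapc (fun y : Y => (⟨(y, ⟨(σ y, S y), hσ y⟩), rfl⟩ : PBs S))
      ((fun y => dInf (S y)) ∘ fun w : PBs S => w.1.1) tr
    have e2 := mapc (fun y : Y => (⟨(y, ⟨(σ y, S y), hσ y⟩), rfl⟩ : PBs S))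
      (fun w : PBs S => w.1.2.1.1) tr
    exact le_trans e1.symm.le (le_trans h2 e2.le)
  -- antitonicity of coded infima in the family
  have infMono : ∀ {Y : Type u} (S S' : Y → Set Sig), (∀ y, S y ⊆ S' y) →
      map (fun y => dInf (S' y)) tr ≤ map (fun y => dInf (S y)) tr := by
    intro Y S S' h
    refine leInf S _ ?_
    rw [mapc]
    exact infLe (fun w : PBs S => S' w.1.1) _ (fun w => h _ (memq S w))
  -- abbreviations
  have main : ∀ (Sa Sb T : X → Set Sig),
      (∀ x, Sa x = phi0 dInf dImp '' (a x).1) →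
      (∀ x, Sb x = phi0 dInf dImp '' (b x).1) →
      (∀ x, T x = phi0 dInf dImp '' (Aimp dInf dImp (a x) (b x)).1) →
      map (fun x => dInf (T x)) tr
        = map (fun x => dInf (Sa x)) tr ⇨ map (fun x => dInf (Sb x)) tr := by
    intro Sa Sb T hSa hSb hT
    apply le_antisymm
    · -- `InfT ≤ Φa ⇨ Φb`
      rw [le_himp_iff]
      refine leInf Sb _ ?_
      rw [map_inf, mapc, mapc]
      -- base `PBs Sb`, projections `p`, `q`
      have hc : ∀ w : PBs Sb,
          dImp (dInf (Sa w.1.1), w.1.2.1.1) ∈ T w.1.1 := by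
        intro w
        have hq : w.1.2.1.1 ∈ Sb w.1.1 := memq Sb w
        rw [hSb] at hq
        obtain ⟨β, hβ, hβe⟩ := hq
        rw [hT]
        refine ⟨A0.arrow (Sa w.1.1) β, ⟨Sa w.1.1, β, rfl, ?_, hβ⟩, ?_⟩
        · rw [hSa]
        · simp [phi0, hβe]
      have h1 : map ((fun x => dInf (T x)) ∘ (fun w : PBs Sb => w.1.1)) tr
          ≤ map (fun w : PBs Sb => dImp (dInf (Sa w.1.1), w.1.2.1.1)) tr :=
        infLe (fun w : PBs Sb => T w.1.1) _ hc
      rw [himp_code] at h1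
      calc map ((fun x => dInf (T x)) ∘ fun w : PBs Sb => w.1.1) tr
            ⊓ map ((fun x => dInf (Sa x)) ∘ fun w : PBs Sb => w.1.1) tr
          ≤ (map (fun w : PBs Sb => dInf (Sa w.1.1)) tr ⇨ map (fun w : PBs Sb => w.1.2.1.1) tr)
            ⊓ map (fun w : PBs Sb => dInf (Sa w.1.1)) tr :=
            inf_le_inf h1 le_rfl
        _ ≤ map (fun w : PBs Sb => w.1.2.1.1) tr := himp_inf_le
    · -- `Φa ⇨ Φb ≤ InfT`
      refine leInf T _ ?_
      rw [map_himp, mapc, mapc]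
      have hex : ∀ w : PBs T, ∃ (s : Set Sig) (β : A0 Sig),
          w.1.2.1.1 = dImp (dInf s, phi0 dInf dImp β) ∧ Sa w.1.1 ⊆ s ∧ β ∈ (b w.1.1).1 := by
        intro w
        have hq : w.1.2.1.1 ∈ T w.1.1 := memq T w
        rw [hT] at hq
        obtain ⟨γ, hγ, hγe⟩ := hq
        obtain ⟨s, β, rfl, hs, hβ⟩ := hγ
        refine ⟨s, β, ?_, ?_, hβ⟩
        · rw [← hγe]; rfl
        · rw [hSa]; exact hs
      choose sE βE hqe hsub hmem using hex
      have hqfun : (fun w : PBs T => w.1.2.1.1)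
          = fun w : PBs T => dImp (dInf (sE w), phi0 dInf dImp (βE w)) := funext hqe
      rw [hqfun, himp_code]
      have h1 : map (fun w : PBs T => dInf (sE w)) tr
          ≤ map ((fun x => dInf (Sa x)) ∘ fun w : PBs T => w.1.1) tr := by
        have := infMono (fun w : PBs T => Sa w.1.1) sE hsub
        exact this
      have h2 : map ((fun x => dInf (Sb x)) ∘ fun w : PBs T => w.1.1) tr
          ≤ map (fun w : PBs T => phi0 dInf dImp (βE w)) tr := by
        refine infLe (fun w : PBs T => Sb w.1.1) _ (fun w => ?_)
        show phi0 dInf dImp (βE w) ∈ Sb w.1.1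
        rw [hSb]
        exact ⟨βE w, hmem w, rfl⟩
      exact himp_le_himp h1 h2
  have key := main (fun x => phi0 dInf dImp '' (a x).1) (fun x => phi0 dInf dImp '' (b x).1)
    (fun x => phi0 dInf dImp '' (Aimp dInf dImp (a x) (b x)).1)
    (fun _ => rfl) (fun _ => rfl) (fun _ => rfl)
  rw [mapc, mapc, mapc]
  exact key
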